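/- For all real x > 0, Stirling's bounds hold: √(2π)·x^(x−1/2)·e^(−x) ≤ Γ(x) ≤ √(2π)·x^(x−1/2)·e^(−x)·e^(1/(12x)). -/

import Mathlib

open Real Filter Topology Finset Set

private lemma hasDerivAt_L1 {t : ℝ} (h1 : -1 < t) (h2 : t < 1) :
    HasDerivAt (fun t : ℝ => Real.log (1 + t) - Real.log (1 - t))
      (1 / (1 + t) + 1 / (1 - t)) t := by
  have ha : HasDerivAt (fun t : ℝ => Real.log (1 + t)) (1 / (1 + t)) t := by
    have := ((hasDerivAt_id t).const_add 1).log (by nlinarith : (1:ℝ) + t ≠ 0)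
    simpa using this
  have hb : HasDerivAt (fun t : ℝ => Real.log (1 - t)) (-1 / (1 - t)) t := by
    have := ((hasDerivAt_id t).const_sub 1).log (by nlinarith : (1:ℝ) - t ≠ 0)
    simpa using this
  have := ha.sub hb
  exact this.congr_deriv (by ring)

private lemma log_ratio_lower {t : ℝ} (h0 : 0 ≤ t) (h1 : t < 1) :
    2 * t ≤ Real.log (1 + t) - Real.log (1 - t) := by
  set F : ℝ → ℝ := fun t => Real.log (1 + t) - Real.log (1 - t) - 2 * t with hFdef
  have hd : ∀ s ∈ Set.Ico (0:ℝ) 1, HasDerivAt F (1 / (1 + s) + 1 / (1 - s) - 2) s := by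
    intro s hs
    simpa [Pi.sub_def] using (hasDerivAt_L1 (by linarith [hs.1]) hs.2).sub ((hasDerivAt_id s).const_mul 2)
  have mono : MonotoneOn F (Set.Ico (0:ℝ) 1) := by
    apply monotoneOn_of_deriv_nonneg (convex_Ico 0 1)
    · intro s hs; exact (hd s hs).continuousAt.continuousWithinAt
    · intro s hs
      rw [interior_Ico] at hs
      exact (hd s ⟨hs.1.le, hs.2⟩).differentiableAt.differentiableWithinAt
    · intro s hs
      rw [interior_Ico] at hs
      rw [(hd s ⟨hs.1.le, hs.2⟩).deriv]
      have h1 : 0 < 1 + s := by linarith [hs.1]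
      have h2 : 0 < 1 - s := by linarith [hs.2]
      rw [div_add_div _ _ h1.ne' h2.ne', sub_nonneg, le_div_iff₀ (by positivity)]
      nlinarith [hs.1, sq_nonneg s]
  have := mono (Set.mem_Ico.2 ⟨le_refl 0, one_pos⟩) (Set.mem_Ico.2 ⟨h0, h1⟩) h0
  simp only [hFdef] at this
  norm_num at this
  linarith

private lemma log_ratio_upper {t : ℝ} (h0 : 0 ≤ t) (h1 : t < 1) :
    Real.log (1 + t) - Real.log (1 - t) ≤ 2 * t + (2/3) * (t^3 / (1 - t^2)) := by
  set F : ℝ → ℝ := fun t => 2 * t + (2/3) * (t^3 / (1 - t^2)) - (Real.log (1 + t) - Real.log (1 - t)) with hFdef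
  have hd : ∀ s ∈ Set.Ico (0:ℝ) 1,
      HasDerivAt F (2 * 1 + 2/3 * ((3*s^2 * (1 - s^2) - s^3 * (-(2*s))) / (1 - s^2)^2)
        - (1 / (1 + s) + 1 / (1 - s))) s := by
    intro s hs
    have hne : (1:ℝ) - s^2 ≠ 0 := by nlinarith [hs.1, hs.2]
    have hq : HasDerivAt (fun u : ℝ => u^3 / (1 - u^2))
        ((3*s^2 * (1 - s^2) - s^3 * (-(2*s))) / (1 - s^2)^2) s := by
      have hnum : HasDerivAt (fun u : ℝ => u^3) (3*s^2) s := by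
        simpa using hasDerivAt_pow 3 s
      have hden : HasDerivAt (fun u : ℝ => 1 - u^2) (-(2*s)) s := by
        simpa using ((hasDerivAt_pow 2 s).const_sub 1)
      simpa [Pi.div_def] using hnum.div hden hne
    exact (((hasDerivAt_id s).const_mul 2).add (hq.const_mul (2/3))).sub
      (hasDerivAt_L1 (by linarith [hs.1]) hs.2)
  have mono : MonotoneOn F (Set.Ico (0:ℝ) 1) := by
    apply monotoneOn_of_deriv_nonneg (convex_Ico 0 1)
    · intro s hs; exact (hd s hs).continuousAt.continuousWithinAt
    · intro s hs
      rw [interior_Ico] at hs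
      exact (hd s ⟨hs.1.le, hs.2⟩).differentiableAt.differentiableWithinAt
    · intro s hs
      rw [interior_Ico] at hs
      rw [(hd s ⟨hs.1.le, hs.2⟩).deriv]
      have h1 : 0 < 1 + s := by linarith [hs.1]
      have h2 : 0 < 1 - s := by linarith [hs.2]
      have h3 : 0 < 1 - s^2 := by nlinarith
      have key : 2 * 1 + 2/3 * ((3*s^2 * (1 - s^2) - s^3 * (-(2*s))) / (1 - s^2)^2)
          - (1 / (1 + s) + 1 / (1 - s)) = (4/3) * s^4 / (1 - s^2)^2 := by
        field_simp
        ring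
      rw [key]
      positivity
  have := mono (Set.mem_Ico.2 ⟨le_refl 0, one_pos⟩) (Set.mem_Ico.2 ⟨h0, h1⟩) h0
  simp only [hFdef] at this
  norm_num at this
  linarith

noncomputable def stirF (x : ℝ) : ℝ :=
  (x - 1/2) * Real.log x - x + Real.log (Real.sqrt (2 * π))

noncomputable def stirG (x : ℝ) : ℝ := Real.log (Real.Gamma x) - stirF x

noncomputable def stirD (x : ℝ) : ℝ := (x + 1/2) * Real.log (1 + 1/x) - 1

private lemma log_one_add_inv (x : ℝ) (hx : 0 < x) :
    Real.log (1 + 1/x) = Real.log (1 + 1/(2*x+1)) - Real.log (1 - 1/(2*x+1)) := by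
  rw [← Real.log_div (by positivity) (by
    have : 1 - 1/(2*x+1) = (2*x)/(2*x+1) := by field_simp; ring
    rw [this]; positivity)]
  congr 1
  field_simp
  ring

private lemma stirD_nonneg {x : ℝ} (hx : 0 < x) : 0 ≤ stirD x := by
  unfold stirD
  set t : ℝ := 1/(2*x+1) with ht
  have ht0 : 0 ≤ t := by positivity
  have ht1 : t < 1 := by
    rw [ht, div_lt_one (by positivity)]; linarith
  have h := log_ratio_lower ht0 ht1
  rw [log_one_add_inv x hx]
  have hx2 : (0:ℝ) < x + 1/2 := by linarith
  have : 2 * t * (x + 1/2) = 1 := by rw [ht]; field_simp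
  nlinarith [mul_le_mul_of_nonneg_right h hx2.le]

private lemma stirD_le {x : ℝ} (hx : 0 < x) :
    stirD x ≤ 1/(12*x) - 1/(12*(x+1)) := by
  unfold stirD
  set t : ℝ := 1/(2*x+1) with ht
  have ht0 : 0 ≤ t := by positivity
  have ht1 : t < 1 := by
    rw [ht, div_lt_one (by positivity)]; linarith
  have h := log_ratio_upper ht0 ht1
  rw [log_one_add_inv x hx]
  have hx2 : (0:ℝ) < x + 1/2 := by linarith
  have key : (x + 1/2) * (2 * t + (2/3) * (t^3 / (1 - t^2))) - 1
      = 1/(12*x) - 1/(12*(x+1)) := by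
    rw [ht]
    have h1 : (1:ℝ) - (1/(2*x+1))^2 = (4*x*(x+1))/(2*x+1)^2 := by field_simp; ring
    rw [h1]
    field_simp
    ring
  nlinarith [mul_le_mul_of_nonneg_left h hx2.le]

private lemma stirG_step {x : ℝ} (hx : 0 < x) : stirG x - stirG (x + 1) = stirD x := by
  unfold stirG stirF stirD
  rw [Real.Gamma_add_one hx.ne', Real.log_mul hx.ne' (Real.Gamma_pos_of_pos hx).ne']
  have hlog : Real.log (x + 1) = Real.log x + Real.log (1 + 1/x) := by
    rw [← Real.log_mul hx.ne' (by positivity : (1:ℝ) + 1/x ≠ 0)]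
    congr 1
    field_simp
  rw [hlog]
  ring

private lemma stirG_teles {x : ℝ} (hx : 0 < x) (n : ℕ) :
    stirG x = stirG (x + n) + ∑ k ∈ Finset.range n, stirD (x + k) := by
  induction n with
  | zero => simp
  | succ n ih =>
    rw [Finset.sum_range_succ, ih]
    have hstep := stirG_step (x := x + n) (by positivity)
    have hcast : x + ((n:ℝ) + 1) = x + (n:ℝ) + 1 := by ring
    push_cast
    rw [hcast]
    linarith

private lemma sum_stirD_nonneg {x : ℝ} (hx : 0 < x) (n : ℕ) :
    0 ≤ ∑ k ∈ Finset.range n, stirD (x + k) :=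
  Finset.sum_nonneg fun k _ => stirD_nonneg (by positivity)

private lemma sum_stirD_le {x : ℝ} (hx : 0 < x) (n : ℕ) :
    ∑ k ∈ Finset.range n, stirD (x + k) ≤ 1/(12*x) := by
  have h1 : ∑ k ∈ Finset.range n, stirD (x + k)
      ≤ ∑ k ∈ Finset.range n, (1/(12*(x+k)) - 1/(12*(x+k+1))) := by
    apply Finset.sum_le_sum
    intro k _
    have := stirD_le (x := x + k) (by positivity)
    linarith [this]
  have h2 : ∑ k ∈ Finset.range n, (1/(12*(x+(k:ℝ))) - 1/(12*(x+k+1)))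
      = 1/(12*x) - 1/(12*(x+n)) := by
    have := Finset.sum_range_sub' (f := fun k : ℕ => 1/(12*(x+(k:ℝ)))) n
    simp only [Nat.cast_zero, add_zero] at this
    rw [← this]
    apply Finset.sum_congr rfl
    intro k _
    push_cast
    ring_nf
  have h3 : 0 < x + (n:ℝ) := by positivity
  have : (0:ℝ) < 1/(12*(x+n)) := by positivity
  linarith [h1, h2.le]

private lemma log_fact_succ (n : ℕ) :
    Real.log ((Nat.factorial (n+1) : ℝ)) = Real.log (Stirling.stirlingSeq (n+1))
      + (1/2) * (Real.log 2 + Real.log ((n:ℝ)+1))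
      + ((n:ℝ)+1) * Real.log ((n:ℝ)+1) - ((n:ℝ)+1) := by
  have hN : (0:ℝ) < (n:ℝ)+1 := by positivity
  have hden : (0:ℝ) < Real.sqrt (2*((n:ℝ)+1)) * (((n:ℝ)+1)/Real.exp 1)^(n+1) := by
    positivity
  have h : ((Nat.factorial (n+1) : ℝ)) = Stirling.stirlingSeq (n+1)
      * (Real.sqrt (2*((n:ℝ)+1)) * (((n:ℝ)+1)/Real.exp 1)^(n+1)) := by
    rw [Stirling.stirlingSeq]
    push_cast
    field_simp
  rw [h, Real.log_mul (Stirling.stirlingSeq'_pos n).ne' hden.ne',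
    Real.log_mul (Real.sqrt_pos.2 (by positivity)).ne' (by positivity),
    Real.log_sqrt (by positivity), Real.log_pow, Real.log_div hN.ne' (Real.exp_pos 1).ne',
    Real.log_exp, Real.log_mul two_ne_zero hN.ne']
  push_cast
  ring

private lemma logGamma_upper {N s : ℝ} (hN : 0 < N) (hs0 : 0 ≤ s) (hs1 : s ≤ 1) :
    Real.log (Real.Gamma (N + s)) ≤ Real.log (Real.Gamma N) + s * Real.log N := by
  have hc := Real.convexOn_log_Gamma
  have h := hc.2 (Set.mem_Ioi.2 hN) (Set.mem_Ioi.2 (by linarith : (0:ℝ) < N + 1))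
    (by linarith : (0:ℝ) ≤ 1 - s) hs0 (by ring)
  simp only [Function.comp_apply, smul_eq_mul] at h
  have hpt : (1 - s) * N + s * (N + 1) = N + s := by ring
  rw [hpt] at h
  have hG1 : Real.log (Real.Gamma (N + 1)) = Real.log N + Real.log (Real.Gamma N) := by
    rw [Real.Gamma_add_one hN.ne', Real.log_mul hN.ne' (Real.Gamma_pos_of_pos hN).ne']
  rw [hG1] at h
  nlinarith [h]

private lemma logGamma_lower {N s : ℝ} (hN : 0 < N) (hs0 : 0 ≤ s) (hs1 : s ≤ 1) :
    Real.log (Real.Gamma (N + 1)) - (1 - s) * Real.log (N + 1)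
      ≤ Real.log (Real.Gamma (N + s)) := by
  have hc := Real.convexOn_log_Gamma
  set θ : ℝ := 1/(2-s) with hθ
  have h2s : (0:ℝ) < 2 - s := by linarith
  have hθ0 : 0 < θ := by positivity
  have hθ1 : θ ≤ 1 := by rw [hθ]; rw [div_le_one h2s]; linarith
  have hsum : θ + (1 - θ) = 1 := by ring
  have h := hc.2 (Set.mem_Ioi.2 (by linarith : (0:ℝ) < N + s))
    (Set.mem_Ioi.2 (by linarith : (0:ℝ) < N + 2)) hθ0.le (by linarith : (0:ℝ) ≤ 1 - θ) hsum
  simp only [Function.comp_apply, smul_eq_mul] at h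
  have hθs : θ * (2 - s) = 1 := by rw [hθ]; field_simp
  have hpt : θ * (N + s) + (1 - θ) * (N + 2) = N + 1 := by nlinarith [hθs]
  rw [hpt] at h
  have hG2 : Real.log (Real.Gamma (N + 2)) = Real.log (N+1) + Real.log (Real.Gamma (N+1)) := by
    have : N + 2 = (N + 1) + 1 := by ring
    rw [this, Real.Gamma_add_one (by linarith : N + 1 ≠ 0),
      Real.log_mul (by linarith : N + 1 ≠ 0) (Real.Gamma_pos_of_pos (by linarith)).ne']
  rw [hG2] at h
  -- h : logΓ(N+1) ≤ θ * logΓ(N+s) + (1-θ)*(log(N+1) + logΓ(N+1))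
  have e2 : θ * (2 - s) * Real.log (N+1) = Real.log (N+1) := by rw [hθs, one_mul]
  have hfin : θ * Real.log (Real.Gamma (N+1))
      ≤ θ * (Real.log (Real.Gamma (N+s)) + (1 - s) * Real.log (N+1)) := by nlinarith [h, e2]
  have := (mul_le_mul_iff_right₀ hθ0).1 hfin
  linarith

private lemma natcast_add_one_tendsto :
    Filter.Tendsto (fun n : ℕ => (n:ℝ)+1) Filter.atTop Filter.atTop :=
  Filter.tendsto_atTop_add_const_right Filter.atTop 1 tendsto_natCast_atTop_atTop

private lemma nlog_tendsto (c : ℝ) :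
    Filter.Tendsto (fun n : ℕ => ((n:ℝ)+1) * Real.log (1 + c/((n:ℝ)+1)))
      Filter.atTop (𝓝 c) := by
  have h0 := (Real.tendsto_one_add_div_pow_exp c).comp (Filter.tendsto_add_atTop_nat 1)
  have hlog := (Real.continuousAt_log (Real.exp_pos c).ne').tendsto.comp h0
  rw [Real.log_exp] at hlog
  refine hlog.congr fun n => ?_
  simp only [Function.comp_apply, Real.log_pow]
  push_cast
  ring

private lemma log_one_add_div_tendsto (c : ℝ) :
    Filter.Tendsto (fun n : ℕ => Real.log (1 + c/((n:ℝ)+1))) Filter.atTop (𝓝 0) := by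
  have h1 : Filter.Tendsto (fun n : ℕ => 1 + c/((n:ℝ)+1)) Filter.atTop (𝓝 1) := by
    have h2 : Filter.Tendsto (fun n : ℕ => c/((n:ℝ)+1)) Filter.atTop (𝓝 0) :=
      Filter.Tendsto.div_atTop tendsto_const_nhds natcast_add_one_tendsto
    simpa using tendsto_const_nhds.add h2
  have := (Real.continuousAt_log one_ne_zero).tendsto.comp h1
  simpa [Function.comp_def] using this

private lemma stirG_ub {s : ℝ} (hs0 : 0 < s) (hs1 : s ≤ 1) (n : ℕ) :
    stirG (s + ((n:ℝ)+1)) ≤ (Real.log (Stirling.stirlingSeq (n+1)) - Real.log (Real.sqrt π))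
      - ((n:ℝ)+1+s-1/2) * Real.log (1 + s/((n:ℝ)+1)) + s := by
  set N : ℝ := (n:ℝ)+1 with hNdef
  have hN0 : (0:ℝ) < N := by positivity
  have hup := logGamma_upper (N := N) (s := s) hN0 hs0.le hs1
  have hcomm : s + N = N + s := by ring
  unfold stirG
  rw [hcomm]
  have hid : Real.log (Real.Gamma N) + s * Real.log N - stirF (N + s)
      = (Real.log (Stirling.stirlingSeq (n+1)) - Real.log (Real.sqrt π))
        - (N+s-1/2) * Real.log (1 + s/N) + s := by
    have hGN : Real.log (Real.Gamma N) = Real.log ((Nat.factorial (n+1) : ℝ)) - Real.log N := by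
      rw [hNdef, Real.Gamma_nat_eq_factorial n]
      have h1 : ((Nat.factorial (n+1) : ℝ)) = ((n:ℝ)+1) * (Nat.factorial n : ℝ) := by
        push_cast [Nat.factorial_succ]; ring
      rw [h1, Real.log_mul (by positivity) (by positivity)]
      ring
    have hNs : Real.log (N + s) = Real.log N + Real.log (1 + s/N) := by
      have h2 : N + s = N * (1 + s/N) := by field_simp
      rw [h2, Real.log_mul hN0.ne' (by positivity)]
    have hsq : Real.log (Real.sqrt (2*π)) = (Real.log 2 + Real.log π)/2 := by
      rw [Real.log_sqrt (by positivity), Real.log_mul two_ne_zero pi_ne_zero]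
    have hsp : Real.log (Real.sqrt π) = Real.log π / 2 := Real.log_sqrt pi_pos.le
    have hlf := log_fact_succ n
    unfold stirF
    rw [hGN, hlf, hNs, hsq, hsp]
    ring
  linarith [hup]

private lemma stirG_lb {s : ℝ} (hs0 : 0 < s) (hs1 : s ≤ 1) (n : ℕ) :
    (Real.log (Stirling.stirlingSeq (n+1)) - Real.log (Real.sqrt π))
      - (1-s) * Real.log (1 + 1/((n:ℝ)+1))
      - ((n:ℝ)+1+s-1/2) * Real.log (1 + s/((n:ℝ)+1)) + s ≤ stirG (s + ((n:ℝ)+1)) := by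
  set N : ℝ := (n:ℝ)+1 with hNdef
  have hN0 : (0:ℝ) < N := by positivity
  have hlow := logGamma_lower (N := N) (s := s) hN0 hs0.le hs1
  have hcomm : s + N = N + s := by ring
  unfold stirG
  rw [hcomm]
  have hid : Real.log (Real.Gamma (N + 1)) - (1-s) * Real.log (N + 1) - stirF (N + s)
      = (Real.log (Stirling.stirlingSeq (n+1)) - Real.log (Real.sqrt π))
        - (1-s) * Real.log (1 + 1/N) - (N+s-1/2) * Real.log (1 + s/N) + s := by
    have hGN : Real.log (Real.Gamma (N + 1)) = Real.log ((Nat.factorial (n+1) : ℝ)) := by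
      have h0 : N + 1 = ((n+1 : ℕ) : ℝ) + 1 := by push_cast; ring
      rw [h0, Real.Gamma_nat_eq_factorial (n+1)]
    have hN1 : Real.log (N + 1) = Real.log N + Real.log (1 + 1/N) := by
      have h2 : N + 1 = N * (1 + 1/N) := by field_simp
      rw [h2, Real.log_mul hN0.ne' (by positivity)]
    have hNs : Real.log (N + s) = Real.log N + Real.log (1 + s/N) := by
      have h2 : N + s = N * (1 + s/N) := by field_simp
      rw [h2, Real.log_mul hN0.ne' (by positivity)]
    have hsq : Real.log (Real.sqrt (2*π)) = (Real.log 2 + Real.log π)/2 := by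
      rw [Real.log_sqrt (by positivity), Real.log_mul two_ne_zero pi_ne_zero]
    have hsp : Real.log (Real.sqrt π) = Real.log π / 2 := Real.log_sqrt pi_pos.le
    have hlf := log_fact_succ n
    unfold stirF
    rw [hGN, hlf, hN1, hNs, hsq, hsp]
    ring
  linarith [hlow]

private lemma tendsto_stirG_succ {s : ℝ} (hs0 : 0 < s) (hs1 : s ≤ 1) :
    Filter.Tendsto (fun n : ℕ => stirG (s + ((n:ℝ)+1))) Filter.atTop (𝓝 0) := by
  have hSlim : Filter.Tendsto
      (fun n : ℕ => Real.log (Stirling.stirlingSeq (n+1)) - Real.log (Real.sqrt π))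
      Filter.atTop (𝓝 0) := by
    have h1 := Stirling.tendsto_stirlingSeq_sqrt_pi.comp (Filter.tendsto_add_atTop_nat 1)
    have h2 := (Real.continuousAt_log (Real.sqrt_pos.2 pi_pos).ne').tendsto.comp h1
    have h3 := h2.sub_const (Real.log (Real.sqrt π))
    simpa using h3
  have hTlim : Filter.Tendsto
      (fun n : ℕ => ((n:ℝ)+1+s-1/2) * Real.log (1 + s/((n:ℝ)+1)))
      Filter.atTop (𝓝 s) := by
    have h1 := (nlog_tendsto s).add ((log_one_add_div_tendsto s).const_mul (s - 1/2))
    have h2 : s + (s - 1/2) * 0 = s := by ring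
    rw [h2] at h1
    refine h1.congr fun n => ?_
    ring
  have hUpLim : Filter.Tendsto
      (fun n : ℕ => (Real.log (Stirling.stirlingSeq (n+1)) - Real.log (Real.sqrt π))
        - ((n:ℝ)+1+s-1/2) * Real.log (1 + s/((n:ℝ)+1)) + s)
      Filter.atTop (𝓝 0) := by
    have h1 := (hSlim.sub hTlim).add_const s
    have h2 : (0:ℝ) - s + s = 0 := by ring
    rwa [h2] at h1
  have hLoLim : Filter.Tendsto
      (fun n : ℕ => (Real.log (Stirling.stirlingSeq (n+1)) - Real.log (Real.sqrt π))
        - (1-s) * Real.log (1 + 1/((n:ℝ)+1))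
        - ((n:ℝ)+1+s-1/2) * Real.log (1 + s/((n:ℝ)+1)) + s)
      Filter.atTop (𝓝 0) := by
    have h1 := ((hSlim.sub ((log_one_add_div_tendsto 1).const_mul (1-s))).sub hTlim).add_const s
    have h2 : (0:ℝ) - (1-s) * 0 - s + s = 0 := by ring
    rw [h2] at h1
    refine h1.congr fun n => ?_
    ring
  exact tendsto_of_tendsto_of_tendsto_of_le_of_le hLoLim hUpLim
    (fun n => stirG_lb hs0 hs1 n) (fun n => stirG_ub hs0 hs1 n)

private lemma tendsto_stirG (x : ℝ) (hx : 0 < x) :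
    Filter.Tendsto (fun n : ℕ => stirG (x + n)) Filter.atTop (𝓝 0) := by
  set m : ℕ := ⌈x⌉₊ - 1 with hm
  have hm1 : 1 ≤ ⌈x⌉₊ := Nat.one_le_ceil_iff.2 hx
  have hms : ((m:ℝ)) = (⌈x⌉₊ : ℝ) - 1 := by
    rw [hm, Nat.cast_sub hm1, Nat.cast_one]
  set s : ℝ := x - (m:ℝ) with hsdef
  have hs0 : 0 < s := by
    have := Nat.ceil_lt_add_one hx.le
    rw [hsdef, hms]; linarith
  have hs1 : s ≤ 1 := by
    have := Nat.le_ceil x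
    rw [hsdef, hms]; linarith
  rw [← Filter.tendsto_add_atTop_iff_nat 1]
  have h := (tendsto_stirG_succ hs0 hs1).comp (Filter.tendsto_add_atTop_nat m)
  refine h.congr fun n => ?_
  simp only [Function.comp_apply]
  congr 1
  rw [hsdef]
  push_cast
  ring

private lemma stirG_bounds {x : ℝ} (hx : 0 < x) : 0 ≤ stirG x ∧ stirG x ≤ 1/(12*x) := by
  have hlim := tendsto_stirG x hx
  have h1 : Filter.Tendsto (fun n : ℕ => stirG x - stirG (x + n)) Filter.atTop (𝓝 (stirG x)) := by
    simpa using (tendsto_const_nhds (x := stirG x) (f := Filter.atTop (α := ℕ))).sub hlim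
  have heq : ∀ n : ℕ, stirG x - stirG (x + n) = ∑ k ∈ Finset.range n, stirD (x + k) := by
    intro n
    have := stirG_teles hx n
    linarith
  constructor
  · apply ge_of_tendsto h1
    filter_upwards with n
    rw [heq n]
    exact sum_stirD_nonneg hx n
  · apply le_of_tendsto h1
    filter_upwards with n
    rw [heq n]
    exact sum_stirD_le hx n

theorem stirling_bounds (x : ℝ) (hx : 0 < x) :
    Real.sqrt (2 * π) * x ^ (x - 1/2) * Real.exp (-x) ≤ Real.Gamma x ∧
    Real.Gamma x ≤ Real.sqrt (2 * π) * x ^ (x - 1/2) * Real.exp (-x) * Real.exp (1 / (12 * x)) := by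
  obtain ⟨hg0, hg1⟩ := stirG_bounds hx
  have hΓ : Real.Gamma x = Real.exp (stirF x) * Real.exp (stirG x) := by
    rw [← Real.exp_add]
    have h : stirF x + stirG x = Real.log (Real.Gamma x) := by unfold stirG; ring
    rw [h, Real.exp_log (Real.Gamma_pos_of_pos hx)]
  have hF : Real.exp (stirF x) = Real.sqrt (2 * π) * x ^ (x - 1/2) * Real.exp (-x) := by
    have h : stirF x = Real.log (Real.sqrt (2*π)) + ((x - 1/2) * Real.log x + (-x)) := by
      unfold stirF; ring
    rw [h, Real.exp_add, Real.exp_add, Real.exp_log (by positivity : (0:ℝ) < Real.sqrt (2*π)),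
      Real.rpow_def_of_pos hx, mul_comm (Real.log x), mul_assoc]
  constructor
  · rw [hΓ, ← hF]
    nlinarith [Real.one_le_exp hg0, Real.exp_pos (stirF x)]
  · rw [hΓ, ← hF]
    have h2 : Real.exp (stirG x) ≤ Real.exp (1/(12*x)) := Real.exp_le_exp.2 hg1
    nlinarith [Real.exp_pos (stirF x), h2]
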